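/- arXiv:2403.07618 — 9 statements merged into one kernel-verified Lean document; each statement's English description precedes it below -/
import Mathlib

section
/- Let P ∈ ℝ^{n×n} be a (row-)stochastic matrix, Π ∈ ℝ^{m×m} arbitrary, A ∈ ℝ^{m×n} arbitrary, π₀ ∈ ℝ^m and p₀ ∈ ℝ^n. Define the error vector e_k by e_kᵀ = π₀ᵀΠ^k A − p₀ᵀP^k. Then for all k, ‖e_k‖₁ ≤ ‖π₀ᵀA − p₀ᵀ‖₁ + Σ_{j=0}^{k−1} ⟨|π_j|, |ΠA − AP|·𝟙ₙ⟩, where π_jᵀ = π₀ᵀΠ^j. -/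
open Matrix BigOperators

noncomputable def l1 {n : ℕ} (v : Fin n → ℝ) : ℝ := ∑ i, |v i|

noncomputable def ninf {m n : ℕ} (A : Matrix (Fin m) (Fin n) ℝ) : ℝ :=
  ⨆ i, ∑ j, |A i j|

def IsStochastic {m n : ℕ} (A : Matrix (Fin m) (Fin n) ℝ) : Prop :=
  (∀ i j, 0 ≤ A i j) ∧ ∀ i, ∑ j, A i j = 1

def IsGenerator {n : ℕ} (Q : Matrix (Fin n) (Fin n) ℝ) : Prop :=
  (∀ i j, i ≠ j → 0 ≤ Q i j) ∧ ∀ i, ∑ j, Q i j = 0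

lemma l1_add_le {n : ℕ} (v w : Fin n → ℝ) : l1 (v + w) ≤ l1 v + l1 w := by
  simp only [l1, ← Finset.sum_add_distrib]
  exact Finset.sum_le_sum fun i _ => abs_add_le _ _

lemma l1_vecMul_le {m n : ℕ} (v : Fin m → ℝ) (M : Matrix (Fin m) (Fin n) ℝ) :
    l1 (Matrix.vecMul v M) ≤ ∑ χ, |v χ| * (∑ i, |M χ i|) := by
  simp only [l1, Matrix.vecMul, dotProduct, Finset.mul_sum]
  rw [Finset.sum_comm]
  refine Finset.sum_le_sum fun χ _ => ?_
  calc |∑ i, v i * M i χ| ≤ ∑ i, |v i * M i χ| := Finset.abs_sum_le_sum_abs _ _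
    _ = ∑ i, |v i| * |M i χ| := by simp [abs_mul]

lemma l1_vecMul_stoch {n : ℕ} (v : Fin n → ℝ) (P : Matrix (Fin n) (Fin n) ℝ)
    (hP : IsStochastic P) : l1 (Matrix.vecMul v P) ≤ l1 v := by
  calc l1 (Matrix.vecMul v P) ≤ ∑ χ, |v χ| * (∑ i, |P χ i|) := l1_vecMul_le v P
    _ = l1 v := by
        refine Finset.sum_congr rfl fun χ _ => ?_
        have : ∑ i, |P χ i| = 1 := by
          rw [← hP.2 χ]; exact Finset.sum_congr rfl fun i _ => abs_of_nonneg (hP.1 χ i)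
        rw [this, mul_one]

theorem stmt_3 {m n : ℕ} (P : Matrix (Fin n) (Fin n) ℝ) (hP : IsStochastic P)
    (Pm : Matrix (Fin m) (Fin m) ℝ) (A : Matrix (Fin m) (Fin n) ℝ)
    (π₀ : Fin m → ℝ) (p₀ : Fin n → ℝ) (k : ℕ) :
    l1 (Matrix.vecMul π₀ (Pm ^ k * A) - Matrix.vecMul p₀ (P ^ k)) ≤
      l1 (Matrix.vecMul π₀ A - p₀) +
        ∑ j ∈ Finset.range k,
          ∑ χ, |Matrix.vecMul π₀ (Pm ^ j) χ| * (∑ i, |(Pm * A - A * P) χ i|) := by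
  induction k with
  | zero => simp [Matrix.vecMul_one]
  | succ k ih =>
    have key : Matrix.vecMul π₀ (Pm ^ (k+1) * A) - Matrix.vecMul p₀ (P ^ (k+1)) =
        Matrix.vecMul (Matrix.vecMul π₀ (Pm ^ k * A) - Matrix.vecMul p₀ (P ^ k)) P +
          Matrix.vecMul (Matrix.vecMul π₀ (Pm ^ k)) (Pm * A - A * P) := by
      rw [pow_succ, pow_succ]
      simp only [Matrix.sub_vecMul, Matrix.vecMul_sub, ← Matrix.vecMul_vecMul,
        mul_assoc]
      abel
    rw [key]
    calc l1 (Matrix.vecMul (Matrix.vecMul π₀ (Pm ^ k * A) - Matrix.vecMul p₀ (P ^ k)) P +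
          Matrix.vecMul (Matrix.vecMul π₀ (Pm ^ k)) (Pm * A - A * P))
        ≤ l1 (Matrix.vecMul (Matrix.vecMul π₀ (Pm ^ k * A) - Matrix.vecMul p₀ (P ^ k)) P) +
          l1 (Matrix.vecMul (Matrix.vecMul π₀ (Pm ^ k)) (Pm * A - A * P)) := l1_add_le _ _
      _ ≤ l1 (Matrix.vecMul π₀ (Pm ^ k * A) - Matrix.vecMul p₀ (P ^ k)) +
          ∑ χ, |Matrix.vecMul π₀ (Pm ^ k) χ| * (∑ i, |(Pm * A - A * P) χ i|) :=
          add_le_add (l1_vecMul_stoch _ _ hP) (l1_vecMul_le _ _)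
      _ ≤ (l1 (Matrix.vecMul π₀ A - p₀) +
            ∑ j ∈ Finset.range k,
              ∑ χ, |Matrix.vecMul π₀ (Pm ^ j) χ| * (∑ i, |(Pm * A - A * P) χ i|)) +
          ∑ χ, |Matrix.vecMul π₀ (Pm ^ k) χ| * (∑ i, |(Pm * A - A * P) χ i|) :=
          add_le_add_left ih _
      _ = _ := by rw [Finset.sum_range_succ]; ring
end

section
/- Let P ∈ ℝ^{n×n} be stochastic, Π ∈ ℝ^{m×m} stochastic, A ∈ ℝ^{m×n} arbitrary, π₀ a probability distribution on {1,…,m}, and p₀ a probability distribution on {1,…,n}. Then for all k ≥ 0, ‖π₀ᵀΠ^k A − p₀ᵀP^k‖₁ ≤ ‖π₀ᵀA − p₀ᵀ‖₁ + k·‖ΠA − AP‖_∞. -/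
open Matrix BigOperators

lemma l1_vecMul_le_s4 {a b : ℕ} (v : Fin a → ℝ) (P : Matrix (Fin a) (Fin b) ℝ)
    (hP : IsStochastic P) : l1 (Matrix.vecMul v P) ≤ l1 v := by
  unfold l1
  have : ∀ j, |Matrix.vecMul v P j| ≤ ∑ i, |v i| * P i j := by
    intro j
    rw [Matrix.vecMul, dotProduct]
    refine (Finset.abs_sum_le_sum_abs _ _).trans ?_
    refine Finset.sum_le_sum fun i _ => ?_
    rw [abs_mul, abs_of_nonneg (hP.1 i j)]
  calc ∑ j, |Matrix.vecMul v P j| ≤ ∑ j, ∑ i, |v i| * P i j :=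
        Finset.sum_le_sum fun j _ => this j
    _ = ∑ i, |v i| * ∑ j, P i j := by rw [Finset.sum_comm]; simp [Finset.mul_sum]
    _ = ∑ i, |v i| := by simp [hP.2]

lemma l1_prob_vecMul_le_ninf {a b : ℕ} (w : Fin a → ℝ)
    (hw : (∀ i, 0 ≤ w i) ∧ ∑ i, w i = 1) (B : Matrix (Fin a) (Fin b) ℝ) :
    l1 (Matrix.vecMul w B) ≤ ninf B := by
  have ha : 0 < a := by
    by_contra h
    have : a = 0 := by omega
    subst this
    simp at hw
  haveI : Nonempty (Fin a) := ⟨⟨0, ha⟩⟩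
  have hrow : ∀ i, ∑ j, |B i j| ≤ ninf B := fun i => by
    unfold ninf
    exact le_ciSup (f := fun i => ∑ j, |B i j|) (Set.Finite.bddAbove (Set.finite_range _)) i
  unfold l1
  calc ∑ j, |Matrix.vecMul w B j| ≤ ∑ j, ∑ i, w i * |B i j| := by
        refine Finset.sum_le_sum fun j _ => ?_
        rw [Matrix.vecMul, dotProduct]
        refine (Finset.abs_sum_le_sum_abs _ _).trans ?_
        refine Finset.sum_le_sum fun i _ => ?_
        rw [abs_mul, abs_of_nonneg (hw.1 i)]
    _ = ∑ i, w i * ∑ j, |B i j| := by rw [Finset.sum_comm]; simp [Finset.mul_sum]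
    _ ≤ ∑ i, w i * ninf B :=
        Finset.sum_le_sum fun i _ => mul_le_mul_of_nonneg_left (hrow i) (hw.1 i)
    _ = ninf B := by rw [← Finset.sum_mul, hw.2, one_mul]

lemma prob_vecMul {a b : ℕ} (w : Fin a → ℝ)
    (hw : (∀ i, 0 ≤ w i) ∧ ∑ i, w i = 1) (P : Matrix (Fin a) (Fin b) ℝ)
    (hP : IsStochastic P) :
    (∀ j, 0 ≤ Matrix.vecMul w P j) ∧ ∑ j, Matrix.vecMul w P j = 1 := by
  constructor
  · intro j
    simp only [Matrix.vecMul, dotProduct]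
    exact Finset.sum_nonneg fun i _ => mul_nonneg (hw.1 i) (hP.1 i j)
  · rw [show ∑ j, Matrix.vecMul w P j = ∑ j, ∑ i, w i * P i j from rfl, Finset.sum_comm]
    simp [← Finset.mul_sum, hP.2, hw.2]

lemma prob_vecMul_pow {a : ℕ} (w : Fin a → ℝ)
    (hw : (∀ i, 0 ≤ w i) ∧ ∑ i, w i = 1) (P : Matrix (Fin a) (Fin a) ℝ)
    (hP : IsStochastic P) (k : ℕ) :
    (∀ j, 0 ≤ Matrix.vecMul w (P ^ k) j) ∧ ∑ j, Matrix.vecMul w (P ^ k) j = 1 := by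
  induction k with
  | zero => simpa using hw
  | succ k ihk =>
    have := prob_vecMul _ ihk P hP
    simpa [pow_succ, ← Matrix.vecMul_vecMul] using this

theorem stmt_4 {m n : ℕ} (P : Matrix (Fin n) (Fin n) ℝ) (hP : IsStochastic P)
    (Pm : Matrix (Fin m) (Fin m) ℝ) (hPm : IsStochastic Pm)
    (A : Matrix (Fin m) (Fin n) ℝ)
    (π₀ : Fin m → ℝ) (hπ₀ : (∀ χ, 0 ≤ π₀ χ) ∧ ∑ χ, π₀ χ = 1)
    (p₀ : Fin n → ℝ) (hp₀ : (∀ i, 0 ≤ p₀ i) ∧ ∑ i, p₀ i = 1) (k : ℕ) :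
    l1 (Matrix.vecMul π₀ (Pm ^ k * A) - Matrix.vecMul p₀ (P ^ k)) ≤
      l1 (Matrix.vecMul π₀ A - p₀) + (k : ℝ) * ninf (Pm * A - A * P) := by
  induction k with
  | zero => simp
  | succ k ih =>
    have hu := prob_vecMul_pow π₀ hπ₀ Pm hPm k
    set u := Matrix.vecMul π₀ (Pm ^ k) with hudef
    have key : Matrix.vecMul π₀ (Pm ^ (k+1) * A) - Matrix.vecMul p₀ (P ^ (k+1)) =
        Matrix.vecMul u (Pm * A - A * P) +
        Matrix.vecMul (Matrix.vecMul π₀ (Pm ^ k * A) - Matrix.vecMul p₀ (P ^ k)) P := by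
      rw [hudef]
      simp only [Matrix.sub_vecMul, Matrix.vecMul_sub, Matrix.vecMul_vecMul,
        pow_succ, ← Matrix.mul_assoc]
      abel
    rw [key]
    calc l1 _ ≤ l1 (Matrix.vecMul u (Pm * A - A * P)) +
          l1 (Matrix.vecMul (Matrix.vecMul π₀ (Pm ^ k * A) - Matrix.vecMul p₀ (P ^ k)) P) :=
          l1_add_le _ _
      _ ≤ ninf (Pm * A - A * P) +
          l1 (Matrix.vecMul π₀ (Pm ^ k * A) - Matrix.vecMul p₀ (P ^ k)) := by
          gcongr
          · exact l1_prob_vecMul_le_ninf u hu _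
          · exact l1_vecMul_le_s4 _ P hP
      _ ≤ ninf (Pm * A - A * P) + (l1 (Matrix.vecMul π₀ A - p₀) + k * ninf (Pm * A - A * P)) := by
          gcongr
      _ = l1 (Matrix.vecMul π₀ A - p₀) + ((k : ℝ) + 1) * ninf (Pm * A - A * P) := by ring
      _ = _ := by push_cast; ring
end

section
/- Let Q ∈ ℝ^{n×n} be a generator matrix (off-diagonal entries nonnegative, rows summing to 0), Θ ∈ ℝ^{m×m} a generator, A ∈ ℝ^{m×n} arbitrary, π₀ a probability distribution on {1,…,m}, p₀ a probability distribution on {1,…,n}. Then for all t ≥ 0, ‖π₀ᵀe^{Θt}A − p₀ᵀe^{Qt}‖₁ ≤ ‖π₀ᵀA − p₀ᵀ‖₁ + t·‖ΘA − AQ‖_∞. -/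
open Matrix BigOperators NormedSpace
open scoped NNReal

section Aux

attribute [local instance] Matrix.linftyOpNormedAddCommGroup Matrix.linftyOpNormedSpace
  Matrix.linftyOpNormedRing Matrix.linftyOpNormedAlgebra

-- norm of a stochastic matrix is ≤ 1
lemma stoch_norm_le {a b : ℕ} (S : Matrix (Fin a) (Fin b) ℝ) (hS : IsStochastic S) : ‖S‖ ≤ 1 := by
  rw [Matrix.linfty_opNorm_def]
  have : ((Finset.univ : Finset (Fin a)).sup fun i => ∑ j, ‖S i j‖₊) ≤ (1 : ℝ≥0) := by
    refine Finset.sup_le fun i _ => ?_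
    have h : ((∑ j, ‖S i j‖₊ : ℝ≥0) : ℝ) = 1 := by
      push_cast
      simp only [coe_nnnorm, Real.norm_eq_abs]
      rw [Finset.sum_congr rfl fun j _ => abs_of_nonneg (hS.1 i j)]
      exact hS.2 i
    exact le_of_eq (by exact_mod_cast h)
  exact_mod_cast this

lemma norm_le_ninf {a b : ℕ} [Nonempty (Fin a)] (A : Matrix (Fin a) (Fin b) ℝ) :
    ‖A‖ ≤ ninf A := by
  rw [Matrix.linfty_opNorm_def]
  have hb : BddAbove (Set.range fun i : Fin a => ∑ j, |A i j|) := (Set.finite_range _).bddAbove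
  have h0 : 0 ≤ ninf A := le_trans (Finset.sum_nonneg fun j _ => abs_nonneg _)
      (le_ciSup hb (Classical.arbitrary (Fin a)))
  have : ((Finset.univ : Finset (Fin a)).sup fun i => ∑ j, ‖A i j‖₊) ≤ ⟨ninf A, h0⟩ := by
    refine Finset.sup_le fun i _ => ?_
    have : ((∑ j, ‖A i j‖₊ : ℝ≥0) : ℝ) ≤ ninf A := by
      push_cast
      simp only [coe_nnnorm, Real.norm_eq_abs]
      exact le_ciSup hb i
    exact_mod_cast this
  exact_mod_cast this

end Aux

section Aux2

attribute [local instance] Matrix.linftyOpNormedAddCommGroup Matrix.linftyOpNormedSpace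
  Matrix.linftyOpNormedRing Matrix.linftyOpNormedAlgebra

lemma pow_entry_nonneg {k : ℕ} {N : Matrix (Fin k) (Fin k) ℝ} (hN : ∀ i j, 0 ≤ N i j) :
    ∀ (p : ℕ) i j, 0 ≤ (N ^ p) i j := by
  intro p
  induction p with
  | zero => intro i j; simp [Matrix.one_apply]; positivity
  | succ q ih =>
    intro i j
    rw [pow_succ, Matrix.mul_apply]
    exact Finset.sum_nonneg fun l _ => mul_nonneg (ih i l) (hN l j)

lemma exp_entry_nonneg {k : ℕ} {N : Matrix (Fin k) (Fin k) ℝ} (hN : ∀ i j, 0 ≤ N i j) :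
    ∀ i j, 0 ≤ (exp N) i j := by
  intro i j
  let E : Matrix (Fin k) (Fin k) ℝ →ₗ[ℝ] ℝ :=
    { toFun := fun M => M i j, map_add' := fun _ _ => rfl, map_smul' := fun _ _ => rfl }
  let Ec := LinearMap.toContinuousLinearMap E
  have hsum : Summable fun p : ℕ => ((p.factorial : ℝ)⁻¹) • N ^ p :=
    NormedSpace.expSeries_summable' (𝕂 := ℝ) N
  have h1 : (exp N) i j = Ec (∑' p : ℕ, ((p.factorial : ℝ)⁻¹) • N ^ p) := by
    rw [NormedSpace.exp_eq_tsum ℝ]; rfl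
  rw [h1, Ec.map_tsum hsum]
  refine tsum_nonneg fun p => ?_
  have : Ec (((p.factorial : ℝ)⁻¹) • N ^ p) = ((p.factorial : ℝ)⁻¹) * (N ^ p) i j := by
    simp [Ec, E]
    exact Or.inl rfl
  rw [this]
  exact mul_nonneg (by positivity) (pow_entry_nonneg hN p i j)


lemma exp_gen_stoch {k : ℕ} (Q : Matrix (Fin k) (Fin k) ℝ) (hQ : IsGenerator Q)
    (t : ℝ) (ht : 0 ≤ t) : IsStochastic (exp (t • Q)) := by
  constructor
  · -- nonnegativity
    set c : ℝ := t * ∑ l, |Q l l| with hc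
    have hc0 : 0 ≤ c := mul_nonneg ht (Finset.sum_nonneg fun _ _ => abs_nonneg _)
    set N : Matrix (Fin k) (Fin k) ℝ := t • Q + c • (1 : Matrix (Fin k) (Fin k) ℝ) with hNdef
    have hN : ∀ i j, 0 ≤ N i j := by
      intro i j
      by_cases h : i = j
      · subst h
        have h1 : N i i = t * Q i i + c := by
          simp [hNdef, Matrix.add_apply, Matrix.smul_apply, Matrix.one_apply, smul_eq_mul]
        rw [h1, hc]
        have : |Q i i| ≤ ∑ l, |Q l l| :=
          Finset.single_le_sum (fun l _ => abs_nonneg (Q l l)) (Finset.mem_univ i)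
        nlinarith [neg_abs_le (Q i i), abs_nonneg (Q i i)]
      · have h1 : N i j = t * Q i j := by
          simp [hNdef, Matrix.add_apply, Matrix.smul_apply, Matrix.one_apply, h, smul_eq_mul]
        rw [h1]
        exact mul_nonneg ht (hQ.1 i j h)
    have hsplit : t • Q = N + (-c) • (1 : Matrix (Fin k) (Fin k) ℝ) := by
      rw [hNdef]; module
    have hcomm : Commute N ((-c) • (1 : Matrix (Fin k) (Fin k) ℝ)) :=
      (Commute.one_right N).smul_right (-c)
    have hmul : exp (t • Q) = exp N * exp ((-c) • (1 : Matrix (Fin k) (Fin k) ℝ)) := by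
      rw [hsplit]; exact NormedSpace.exp_add_of_commute hcomm
    have halg : exp ((-c) • (1 : Matrix (Fin k) (Fin k) ℝ))
        = Real.exp (-c) • (1 : Matrix (Fin k) (Fin k) ℝ) := by
      have h1 : ((-c) • (1 : Matrix (Fin k) (Fin k) ℝ))
          = algebraMap ℝ (Matrix (Fin k) (Fin k) ℝ) (-c) := by
        rw [Algebra.algebraMap_eq_smul_one]
      rw [h1]
      have := NormedSpace.algebraMap_exp_comm (𝔸 := Matrix (Fin k) (Fin k) ℝ) (-c)
      rw [Algebra.algebraMap_eq_smul_one, ← Real.exp_eq_exp_ℝ] at this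
      exact this.symm
    intro i j
    rw [hmul, halg, mul_smul_comm, mul_one]
    exact mul_nonneg (Real.exp_nonneg _) (exp_entry_nonneg hN i j)
  · -- row sums
    intro i
    let u : Fin k → ℝ := fun _ => 1
    let L : Matrix (Fin k) (Fin k) ℝ →ₗ[ℝ] (Fin k → ℝ) :=
      { toFun := fun M => M *ᵥ u,
        map_add' := fun X Y => Matrix.add_mulVec X Y u,
        map_smul' := fun r X => by simp [Matrix.smul_mulVec] }
    let Lc := LinearMap.toContinuousLinearMap L
    have hQu : Q *ᵥ u = 0 := by
      funext l
      simp only [Matrix.mulVec, dotProduct, u, mul_one]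
      exact hQ.2 l
    have hterm : ∀ p : ℕ, p ≠ 0 → ((p.factorial : ℝ)⁻¹) • ((t • Q) ^ p *ᵥ u) = 0 := by
      intro p hp
      obtain ⟨q, rfl⟩ := Nat.exists_eq_succ_of_ne_zero hp
      have : (t • Q) ^ (q + 1) *ᵥ u = 0 := by
        rw [pow_succ, ← Matrix.mulVec_mulVec, Matrix.smul_mulVec, hQu, smul_zero,
          Matrix.mulVec_zero]
      rw [this, smul_zero]
    have hsum : Summable fun p : ℕ => ((p.factorial : ℝ)⁻¹) • (t • Q) ^ p :=
      NormedSpace.expSeries_summable' (𝕂 := ℝ) (t • Q)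
    have key : exp (t • Q) *ᵥ u = u := by
      have h1 : exp (t • Q) *ᵥ u = Lc (∑' p : ℕ, ((p.factorial : ℝ)⁻¹) • (t • Q) ^ p) := by
        rw [NormedSpace.exp_eq_tsum ℝ]; rfl
      have h2 : ∀ p : ℕ, Lc (((p.factorial : ℝ)⁻¹) • (t • Q) ^ p)
          = ((p.factorial : ℝ)⁻¹) • ((t • Q) ^ p *ᵥ u) := by
        intro p; simp [Lc, L]
      rw [h1, Lc.map_tsum hsum]
      rw [tsum_eq_single 0 (fun p hp => by rw [h2 p, hterm p hp])]
      rw [h2 0]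
      simp
    have : (exp (t • Q) *ᵥ u) i = 1 := by rw [key]
    simpa only [Matrix.mulVec, dotProduct, u, mul_one] using this


noncomputable def mulL {a b c : ℕ} :
    Matrix (Fin a) (Fin b) ℝ →L[ℝ] Matrix (Fin b) (Fin c) ℝ →L[ℝ] Matrix (Fin a) (Fin c) ℝ :=
  LinearMap.toContinuousLinearMap
  { toFun := fun X => LinearMap.toContinuousLinearMap
      { toFun := fun Y => X * Y,
        map_add' := fun Y Z => Matrix.mul_add X Y Z,
        map_smul' := fun r Y => by simp [Matrix.mul_smul] }
    map_add' := fun X X' => ContinuousLinearMap.ext fun Y => by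
      simp [Matrix.add_mul]
    map_smul' := fun r X => ContinuousLinearMap.ext fun Y => by
      simp [Matrix.smul_mul] }

@[simp] lemma mulL_apply {a b c : ℕ} (X : Matrix (Fin a) (Fin b) ℝ)
    (Y : Matrix (Fin b) (Fin c) ℝ) : mulL X Y = X * Y := rfl

set_option maxHeartbeats 1000000 in
lemma duhamel {m n : ℕ} (Q : Matrix (Fin n) (Fin n) ℝ) (Θ : Matrix (Fin m) (Fin m) ℝ)
    (A : Matrix (Fin m) (Fin n) ℝ) (t : ℝ) :
    exp (t • Θ) * A - A * exp (t • Q)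
      = ∫ s in (0:ℝ)..t, exp (s • Θ) * (Θ * A - A * Q) * exp ((t - s) • Q) := by
  have hcontΘ : Continuous fun s : ℝ => exp (s • Θ) :=
    NormedSpace.exp_continuous.comp (continuous_id.smul continuous_const)
  have hcontQ : Continuous fun s : ℝ => exp ((t - s) • Q) :=
    NormedSpace.exp_continuous.comp ((continuous_const.sub continuous_id).smul continuous_const)
  have hD : ∀ s : ℝ, HasDerivAt
      (fun s => exp (s • Θ) * A * exp ((t - s) • Q))
      (exp (s • Θ) * (Θ * A - A * Q) * exp ((t - s) • Q)) s := by
    intro s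
    have hu : HasDerivAt (fun s : ℝ => exp (s • Θ) * A) (exp (s • Θ) * Θ * A) s := by
      have h1 : HasDerivAt (fun s : ℝ => exp (s • Θ)) (exp (s • Θ) * Θ) s :=
        hasDerivAt_exp_smul_const (𝕂 := ℝ) Θ s
      have h2 : HasDerivAt (fun _ : ℝ => A) 0 s := hasDerivAt_const s A
      have := (mulL (a := m) (b := m) (c := n)).hasDerivAt_of_bilinear (fun _ => h1) (fun _ => h2)
      simp at this; exact this
    have hv : HasDerivAt (fun s : ℝ => exp ((t - s) • Q))
        (-(Q * exp ((t - s) • Q))) s := by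
      have h1 : HasDerivAt (fun u : ℝ => exp (u • Q)) (Q * exp ((t - s) • Q)) (t - s) :=
        hasDerivAt_exp_smul_const' (𝕂 := ℝ) Q (t - s)
      have h2 : HasDerivAt (fun s : ℝ => t - s) (-1) s := by
        simpa using (hasDerivAt_id s).const_sub t
      have := h1.scomp s h2
      simp at this; exact this
    have := (mulL (a := m) (b := n) (c := n)).hasDerivAt_of_bilinear (fun _ => hu) (fun _ => hv)
    replace this : HasDerivAt (fun s => exp (s • Θ) * A * exp ((t - s) • Q))
        (exp (s • Θ) * A * (-(Q * exp ((t - s) • Q))) + exp (s • Θ) * Θ * A * exp ((t - s) • Q)) s :=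
      this
    convert this using 1
    have hQE : Q * exp ((t - s) • Q) = exp ((t - s) • Q) * Q :=
      (((Commute.refl Q).smul_right (t - s)).exp_right).eq
    rw [Matrix.mul_sub, Matrix.sub_mul, Matrix.mul_neg]
    simp only [Matrix.mul_assoc, hQE]
    abel
  have hint :=
    ((hcontΘ.matrix_mul (continuous_const (y := Θ * A - A * Q))).matrix_mul hcontQ).intervalIntegrable (μ := MeasureTheory.volume) 0 t
  have := intervalIntegral.integral_eq_sub_of_hasDerivAt (fun s _ => hD s) hint
  rw [this]
  simp [NormedSpace.exp_zero]


lemma duhamel_norm {m n : ℕ} (Q : Matrix (Fin n) (Fin n) ℝ) (hQ : IsGenerator Q)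
    (Θ : Matrix (Fin m) (Fin m) ℝ) (hΘ : IsGenerator Θ) (A : Matrix (Fin m) (Fin n) ℝ)
    (t : ℝ) (ht : 0 ≤ t) :
    ‖exp (t • Θ) * A - A * exp (t • Q)‖ ≤ t * ‖Θ * A - A * Q‖ := by
  rw [duhamel Q Θ A t]
  have hle : ∀ s ∈ Set.uIoc (0:ℝ) t,
      ‖exp (s • Θ) * (Θ * A - A * Q) * exp ((t - s) • Q)‖ ≤ ‖Θ * A - A * Q‖ := by
    intro s hs
    rw [Set.uIoc_of_le ht] at hs
    have hs0 : 0 ≤ s := le_of_lt hs.1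
    have hst : 0 ≤ t - s := sub_nonneg.mpr hs.2
    have h1 : ‖exp (s • Θ)‖ ≤ 1 := stoch_norm_le _ (exp_gen_stoch Θ hΘ s hs0)
    have h2 : ‖exp ((t - s) • Q)‖ ≤ 1 := stoch_norm_le _ (exp_gen_stoch Q hQ (t - s) hst)
    calc ‖exp (s • Θ) * (Θ * A - A * Q) * exp ((t - s) • Q)‖
        ≤ ‖exp (s • Θ) * (Θ * A - A * Q)‖ * ‖exp ((t - s) • Q)‖ :=
          Matrix.linfty_opNorm_mul _ _
      _ ≤ ‖exp (s • Θ)‖ * ‖Θ * A - A * Q‖ * ‖exp ((t - s) • Q)‖ := by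
          gcongr; exact Matrix.linfty_opNorm_mul _ _
      _ ≤ 1 * ‖Θ * A - A * Q‖ * 1 := by gcongr
      _ = ‖Θ * A - A * Q‖ := by ring
  have := intervalIntegral.norm_integral_le_of_norm_le_const hle
  rw [sub_zero, abs_of_nonneg ht] at this
  linarith [this]


lemma l1_eq_norm {k : ℕ} (v : Fin k → ℝ) : l1 v = ‖Matrix.replicateRow (Fin 1) v‖ := by
  rw [show ‖Matrix.replicateRow (Fin 1) v‖ = ∑ i, ‖v i‖ from Matrix.linfty_opNorm_replicateRow v]
  simp [l1, Real.norm_eq_abs]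

lemma row_sub' {k : ℕ} (x y : Fin k → ℝ) :
    Matrix.replicateRow (Fin 1) (x - y) = Matrix.replicateRow (Fin 1) x - Matrix.replicateRow (Fin 1) y := by
  ext i j; simp [Matrix.replicateRow_apply]

theorem stmt_6' {m n : ℕ} (Q : Matrix (Fin n) (Fin n) ℝ) (hQ : IsGenerator Q)
    (Θ : Matrix (Fin m) (Fin m) ℝ) (hΘ : IsGenerator Θ)
    (A : Matrix (Fin m) (Fin n) ℝ)
    (π₀ : Fin m → ℝ) (hπ₀ : (∀ χ, 0 ≤ π₀ χ) ∧ ∑ χ, π₀ χ = 1)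
    (p₀ : Fin n → ℝ) (hp₀ : (∀ i, 0 ≤ p₀ i) ∧ ∑ i, p₀ i = 1)
    (t : ℝ) (ht : 0 ≤ t) :
    l1 (Matrix.vecMul π₀ (NormedSpace.exp (t • Θ) * A) -
          Matrix.vecMul p₀ (NormedSpace.exp (t • Q))) ≤
      l1 (Matrix.vecMul π₀ A - p₀) + t * ninf (Θ * A - A * Q) := by
  have hm : Nonempty (Fin m) := by
    rcases isEmpty_or_nonempty (Fin m) with h|h
    · exfalso
      have h2 := hπ₀.2
      rw [Finset.univ_eq_empty, Finset.sum_empty] at h2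
      norm_num at h2
    · exact h
  set E1 := exp (t • Θ) with hE1
  set E2 := exp (t • Q) with hE2
  set G := Θ * A - A * Q with hG
  have hπnorm : ‖Matrix.replicateRow (Fin 1) π₀‖ = 1 := by
    rw [show ‖Matrix.replicateRow (Fin 1) π₀‖ = ∑ i, ‖π₀ i‖ from Matrix.linfty_opNorm_replicateRow π₀]
    simp only [Real.norm_eq_abs]
    rw [Finset.sum_congr rfl fun i _ => abs_of_nonneg (hπ₀.1 i)]
    exact hπ₀.2
  have hE2norm : ‖E2‖ ≤ 1 := stoch_norm_le _ (exp_gen_stoch Q hQ t ht)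
  have hsplit : Matrix.replicateRow (Fin 1) (Matrix.vecMul π₀ (E1 * A) - Matrix.vecMul p₀ E2)
      = Matrix.replicateRow (Fin 1) π₀ * (E1 * A - A * E2)
        + (Matrix.replicateRow (Fin 1) π₀ * A - Matrix.replicateRow (Fin 1) p₀) * E2 := by
    rw [row_sub', Matrix.replicateRow_vecMul, Matrix.replicateRow_vecMul]
    simp only [Matrix.mul_sub, Matrix.sub_mul, ← Matrix.mul_assoc]
    abel
  have hrow2 : Matrix.replicateRow (Fin 1) π₀ * A - Matrix.replicateRow (Fin 1) p₀
      = Matrix.replicateRow (Fin 1) (Matrix.vecMul π₀ A - p₀) := by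
    rw [row_sub', Matrix.replicateRow_vecMul]
  calc l1 (Matrix.vecMul π₀ (E1 * A) - Matrix.vecMul p₀ E2)
      = ‖Matrix.replicateRow (Fin 1) (Matrix.vecMul π₀ (E1 * A) - Matrix.vecMul p₀ E2)‖ := l1_eq_norm _
    _ = ‖Matrix.replicateRow (Fin 1) π₀ * (E1 * A - A * E2)
          + (Matrix.replicateRow (Fin 1) π₀ * A - Matrix.replicateRow (Fin 1) p₀) * E2‖ := by rw [hsplit]
    _ ≤ ‖Matrix.replicateRow (Fin 1) π₀ * (E1 * A - A * E2)‖
          + ‖(Matrix.replicateRow (Fin 1) π₀ * A - Matrix.replicateRow (Fin 1) p₀) * E2‖ := norm_add_le _ _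
    _ ≤ ‖Matrix.replicateRow (Fin 1) π₀‖ * ‖E1 * A - A * E2‖
          + ‖Matrix.replicateRow (Fin 1) π₀ * A - Matrix.replicateRow (Fin 1) p₀‖ * ‖E2‖ := by
        gcongr <;> exact Matrix.linfty_opNorm_mul _ _
    _ ≤ 1 * (t * ninf G) + l1 (Matrix.vecMul π₀ A - p₀) * 1 := by
        rw [hπnorm, hrow2, ← l1_eq_norm]
        gcongr
        · calc ‖E1 * A - A * E2‖ ≤ t * ‖G‖ := duhamel_norm Q hQ Θ hΘ A t ht
            _ ≤ t * ninf G := by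
              have := norm_le_ninf (a := m) (b := n) G
              nlinarith [this]
        · exact (l1_eq_norm _ ▸ norm_nonneg _ : (0:ℝ) ≤ l1 (Matrix.vecMul π₀ A - p₀))
    _ = l1 (Matrix.vecMul π₀ A - p₀) + t * ninf G := by ring

end Aux2

theorem stmt_6 {m n : ℕ} (Q : Matrix (Fin n) (Fin n) ℝ) (hQ : IsGenerator Q)
    (Θ : Matrix (Fin m) (Fin m) ℝ) (hΘ : IsGenerator Θ)
    (A : Matrix (Fin m) (Fin n) ℝ)
    (π₀ : Fin m → ℝ) (hπ₀ : (∀ χ, 0 ≤ π₀ χ) ∧ ∑ χ, π₀ χ = 1)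
    (p₀ : Fin n → ℝ) (hp₀ : (∀ i, 0 ≤ p₀ i) ∧ ∑ i, p₀ i = 1)
    (t : ℝ) (ht : 0 ≤ t) :
    l1 (Matrix.vecMul π₀ (NormedSpace.exp (t • Θ) * A) -
          Matrix.vecMul p₀ (NormedSpace.exp (t • Q))) ≤
      l1 (Matrix.vecMul π₀ A - p₀) + t * ninf (Θ * A - A * Q) :=
  stmt_6' Q hQ Θ hΘ A π₀ hπ₀ p₀ hp₀ t ht
end

section
/- Assume ΠA = AP with P stochastic, and assume π₀ᵀA ≥ p₀ᵀ entrywise (or π₀ᵀA ≤ p₀ᵀ entrywise). Then for all k ≥ 0, ‖π₀ᵀΠ^k A − p₀ᵀP^k‖₁ = ‖π₀ᵀA − p₀ᵀ‖₁. Moreover, if π₀ᵀA ≥ p₀ᵀ entrywise, then π₀ᵀΠ^k A ≥ p₀ᵀP^k entrywise for all k. -/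
open Matrix BigOperators

lemma pow_stoch {n : ℕ} (P : Matrix (Fin n) (Fin n) ℝ) (hP : IsStochastic P) :
    ∀ k : ℕ, IsStochastic (P ^ k) := by
  intro k
  induction k with
  | zero =>
    constructor
    · intro i j
      simp [pow_zero, Matrix.one_apply]
      split <;> norm_num
    · intro i
      simp [pow_zero, Matrix.one_apply]
  | succ k ih =>
    constructor
    · intro i j
      rw [pow_succ, Matrix.mul_apply]
      exact Finset.sum_nonneg fun l _ => mul_nonneg (ih.1 i l) (hP.1 l j)
    · intro i
      rw [pow_succ]
      simp only [Matrix.mul_apply]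
      rw [Finset.sum_comm]
      calc ∑ l, ∑ j, (P ^ k) i l * P l j
          = ∑ l, (P ^ k) i l * ∑ j, P l j := by
            simp [Finset.mul_sum]
        _ = ∑ l, (P ^ k) i l := by simp [hP.2]
        _ = 1 := ih.2 i

lemma vecMul_nonneg_sum {n p : ℕ} (S : Matrix (Fin n) (Fin p) ℝ) (hS : IsStochastic S)
    (v : Fin n → ℝ) : ∑ j, Matrix.vecMul v S j = ∑ i, v i := by
  simp only [Matrix.vecMul, dotProduct]
  rw [Finset.sum_comm]
  simp [← Finset.mul_sum, hS.2]

theorem stmt_10 {m n : ℕ} (P : Matrix (Fin n) (Fin n) ℝ) (hP : IsStochastic P)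
    (Pm : Matrix (Fin m) (Fin m) ℝ) (A : Matrix (Fin m) (Fin n) ℝ)
    (hdyn : Pm * A = A * P) (π₀ : Fin m → ℝ) (p₀ : Fin n → ℝ)
    (hord : (∀ i, p₀ i ≤ Matrix.vecMul π₀ A i) ∨ (∀ i, Matrix.vecMul π₀ A i ≤ p₀ i)) :
    (∀ k : ℕ, l1 (Matrix.vecMul π₀ (Pm ^ k * A) - Matrix.vecMul p₀ (P ^ k)) =
        l1 (Matrix.vecMul π₀ A - p₀)) ∧
    ((∀ i, p₀ i ≤ Matrix.vecMul π₀ A i) →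
      ∀ (k : ℕ) (i : Fin n),
        Matrix.vecMul p₀ (P ^ k) i ≤ Matrix.vecMul π₀ (Pm ^ k * A) i) := by
  have hcomm : ∀ k : ℕ, Pm ^ k * A = A * P ^ k := by
    intro k
    induction k with
    | zero => simp
    | succ k ih =>
      rw [pow_succ, pow_succ, Matrix.mul_assoc, hdyn, ← Matrix.mul_assoc, ih,
        Matrix.mul_assoc]
  set v : Fin n → ℝ := Matrix.vecMul π₀ A - p₀ with hv
  have key : ∀ k : ℕ,
      Matrix.vecMul π₀ (Pm ^ k * A) - Matrix.vecMul p₀ (P ^ k) =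
        Matrix.vecMul v (P ^ k) := by
    intro k
    rw [hcomm k, hv, Matrix.sub_vecMul, ← Matrix.vecMul_vecMul]
  have hstoch := pow_stoch P hP
  have hmono : ∀ (k : ℕ) (j : Fin n), (∀ i, 0 ≤ v i) → 0 ≤ Matrix.vecMul v (P ^ k) j := by
    intro k j hv0
    simp only [Matrix.vecMul, dotProduct]
    exact Finset.sum_nonneg fun i _ => mul_nonneg (hv0 i) ((hstoch k).1 i j)
  constructor
  · intro k
    rw [key k]
    rcases hord with h | h
    · have hv0 : ∀ i, 0 ≤ v i := fun i => sub_nonneg.mpr (h i)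
      unfold l1
      rw [Finset.sum_congr rfl fun j _ => abs_of_nonneg (hmono k j hv0),
        vecMul_nonneg_sum _ (hstoch k),
        Finset.sum_congr rfl fun i _ => (abs_of_nonneg (hv0 i)).symm]
    · have hv0 : ∀ i, 0 ≤ -v i := fun i => by
        simp [hv]; exact h i
      have hneg : ∀ j, 0 ≤ Matrix.vecMul (-v) (P ^ k) j := by
        intro j
        simp only [Matrix.vecMul, dotProduct]
        exact Finset.sum_nonneg fun i _ => mul_nonneg (by simpa using hv0 i) ((hstoch k).1 i j)
      unfold l1
      have habs : ∀ j, |Matrix.vecMul v (P ^ k) j| = Matrix.vecMul (-v) (P ^ k) j := by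
        intro j
        have h1 : Matrix.vecMul (-v) (P ^ k) j = -(Matrix.vecMul v (P ^ k) j) := by
          rw [Matrix.neg_vecMul]; rfl
        rw [h1]
        exact abs_of_nonpos (by have := hneg j; rw [h1] at this; linarith)
      rw [Finset.sum_congr rfl fun j _ => habs j, vecMul_nonneg_sum _ (hstoch k)]
      refine Finset.sum_congr rfl fun i _ => ?_
      rw [Pi.neg_apply]
      exact (abs_of_nonpos (by have := hv0 i; simp at this; linarith)).symm
  · intro h k i
    have hv0 : ∀ i, 0 ≤ v i := fun i => sub_nonneg.mpr (h i)
    have h1 := hmono k i hv0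
    have h2 := congrFun (key k) i
    simp only [Pi.sub_apply] at h2
    linarith
end

section
/- Let A ∈ ℝ^{m×n} have all entries nonnegative with at least one strictly positive entry in every row, let P ∈ ℝ^{n×n} be stochastic, and let Π ∈ ℝ^{m×m} satisfy ‖ΠA − AP‖_∞ > 0. Then there exist a probability distribution p₀ on {1,…,n} and a nonnegative vector π₀ ∈ ℝ^m with π₀ᵀA = p₀ᵀ such that ‖π₀ᵀΠA − p₀ᵀP‖₁ = ‖π₀‖₁ · ‖ΠA − AP‖_∞. -/
open Matrix BigOperators

theorem stmt_14 {m n : ℕ} (A : Matrix (Fin m) (Fin n) ℝ)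
    (hA0 : ∀ χ i, 0 ≤ A χ i) (hArow : ∀ χ, ∃ i, 0 < A χ i)
    (P : Matrix (Fin n) (Fin n) ℝ) (hP : IsStochastic P)
    (Pm : Matrix (Fin m) (Fin m) ℝ) (herr : 0 < ninf (Pm * A - A * P)) :
    ∃ (p₀ : Fin n → ℝ) (π₀ : Fin m → ℝ),
      (∀ i, 0 ≤ p₀ i) ∧ (∑ i, p₀ i = 1) ∧ (∀ χ, 0 ≤ π₀ χ) ∧
      Matrix.vecMul π₀ A = p₀ ∧
      l1 (Matrix.vecMul π₀ (Pm * A) - Matrix.vecMul p₀ P) =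
        l1 π₀ * ninf (Pm * A - A * P) := by
  set E := Pm * A - A * P with hE
  -- m is nonempty
  have hm : Nonempty (Fin m) := by
    by_contra h
    rw [not_nonempty_iff] at h
    have : ninf E = 0 := by
      haveI := h
      exact Real.iSup_of_isEmpty _
    rw [this] at herr; exact lt_irrefl 0 herr
  -- the sup is attained
  obtain ⟨χ, hχ⟩ := Finite.exists_max (fun i => ∑ j, |E i j|)
  have hattain : ninf E = ∑ j, |E χ j| := by
    apply le_antisymm
    · exact ciSup_le hχ
    · exact le_ciSup (Set.Finite.bddAbove (Set.finite_range
        (fun i => ∑ j, |E i j|))) χ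
  obtain ⟨i₀, hi₀⟩ := hArow χ
  set s : ℝ := ∑ j, A χ j with hs
  have hspos : 0 < s := by
    apply Finset.sum_pos' (fun j _ => hA0 χ j) ⟨i₀, Finset.mem_univ _, hi₀⟩
  refine ⟨fun j => A χ j / s, fun i => if i = χ then 1 / s else 0, ?_, ?_, ?_, ?_, ?_⟩
  · intro j; exact div_nonneg (hA0 χ j) hspos.le
  · rw [← Finset.sum_div, ← hs, div_self hspos.ne']
  · intro i; dsimp only; split <;> positivity
  · funext j
    simp only [vecMul, dotProduct]
    rw [Finset.sum_eq_single χ]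
    · simp [div_eq_mul_inv, mul_comm]
    · intro b _ hb; simp [hb]
    · simp
  · have hpi : (fun i => if i = χ then (1:ℝ) / s else 0) ᵥ* (Pm * A)
        = fun j => (Pm * A) χ j / s := by
      funext j
      simp only [vecMul, dotProduct]
      rw [Finset.sum_eq_single χ]
      · simp [div_eq_mul_inv, mul_comm]
      · intro b _ hb; simp [hb]
      · simp
    have hp : (fun j => A χ j / s) ᵥ* P = fun j => (A * P) χ j / s := by
      funext j
      simp only [vecMul, dotProduct, Matrix.mul_apply, div_mul_eq_mul_div,
        ← Finset.sum_div]
    rw [hpi, hp, hattain]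
    have hl1 : l1 (fun i => if i = χ then (1:ℝ)/s else 0) = 1/s := by
      unfold l1
      rw [Finset.sum_eq_single χ]
      · simp [abs_of_pos, hspos]
      · intro b _ hb; simp [hb]
      · simp
    rw [hl1]
    unfold l1
    have heq : ∀ j, ((fun j => (Pm * A) χ j / s) - fun j => (A * P) χ j / s) j
        = E χ j / s := by
      intro j
      simp [hE, sub_div]
    calc ∑ j, |((fun j => (Pm * A) χ j / s) - fun j => (A * P) χ j / s) j|
        = ∑ j, |E χ j| / s := by
          refine Finset.sum_congr rfl fun j _ => ?_
          rw [heq j, abs_div, abs_of_pos hspos]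
      _ = 1 / s * ∑ j, |E χ j| := by rw [← Finset.sum_div]; ring
end

section
/- Let P be the transition matrix of a Markov chain on state space S with partition Ω, aggregation matrix Λ ∈ ℝ^{n×m} (indicator columns of the partition blocks) and disaggregation matrix A ∈ ℝ^{m×n} whose rows are probability distributions α_σ supported on the blocks σ ∈ Ω (so AΛ = I). If the partition is exactly lumpable, i.e., for all states s,s' in the same block and every block ρ, Σ_{r∈ρ} P(r,s) = Σ_{r∈ρ} P(r,s'), and if each α_σ is the uniform distribution on σ, then with Π = APΛ one has ΠA = AP. -/
open Matrix BigOperators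

/-- indicator (aggregation) matrix Λ of a partition given by `ω`. -/
def indΛ {n m : ℕ} (ω : Fin n → Fin m) : Matrix (Fin n) (Fin m) ℝ :=
  fun s σ => if ω s = σ then 1 else 0

/-- size of the block of `ρ`. -/
def blockCard {n m : ℕ} (ω : Fin n → Fin m) (ρ : Fin m) : ℕ :=
  (Finset.univ.filter fun s => ω s = ρ).card

/-- disaggregation matrix with uniform α distributions. -/
noncomputable def uniformA {n m : ℕ} (ω : Fin n → Fin m) : Matrix (Fin m) (Fin n) ℝ :=
  fun σ s => if ω s = σ then ((blockCard ω σ : ℝ))⁻¹ else 0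

/-- disaggregation matrix with rows the α distributions. -/
def weightA {n m : ℕ} (ω : Fin n → Fin m) (α : Fin n → ℝ) : Matrix (Fin m) (Fin n) ℝ :=
  fun σ s => if ω s = σ then α s else 0

theorem stmt_15 {n m : ℕ} (ω : Fin n → Fin m) (hω : Function.Surjective ω)
    (P : Matrix (Fin n) (Fin n) ℝ) (hP : IsStochastic P)
    (hlump : ∀ s s', ω s = ω s' → ∀ ρ : Fin m,
      ∑ r ∈ Finset.univ.filter (fun r => ω r = ρ), P r s =
      ∑ r ∈ Finset.univ.filter (fun r => ω r = ρ), P r s') :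
    (uniformA ω * P * indΛ ω) * uniformA ω = uniformA ω * P := by
  have hAP : ∀ σ t, (uniformA ω * P) σ t =
      ((blockCard ω σ : ℝ))⁻¹ * ∑ r ∈ Finset.univ.filter (fun r => ω r = σ), P r t := by
    intro σ t
    rw [Matrix.mul_apply, Finset.mul_sum, Finset.sum_filter]
    congr 1; ext r; unfold uniformA; split <;> simp
  have hconst : ∀ σ s t, ω t = ω s → (uniformA ω * P) σ t = (uniformA ω * P) σ s := by
    intro σ s t h
    rw [hAP, hAP, hlump t s h σ]
  ext σ s
  rw [Matrix.mul_apply]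
  rw [Finset.sum_eq_single (ω s)]
  · rw [Matrix.mul_apply]
    have h1 : ∑ t, (uniformA ω * P) σ t * indΛ ω t (ω s)
        = (blockCard ω (ω s) : ℝ) * (uniformA ω * P) σ s := by
      have : ∀ t, (uniformA ω * P) σ t * indΛ ω t (ω s)
          = if ω t = ω s then (uniformA ω * P) σ s else 0 := by
        intro t
        unfold indΛ
        split
        · rw [hconst σ s t (by assumption), mul_one]
        · rw [mul_zero]
      rw [Finset.sum_congr rfl fun t _ => this t, ← Finset.sum_filter,
        Finset.sum_const, blockCard, nsmul_eq_mul]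
    rw [h1]
    have hcard : (blockCard ω (ω s) : ℝ) ≠ 0 := by
      have : s ∈ Finset.univ.filter (fun r => ω r = ω s) := by simp
      have h := Finset.card_pos.mpr ⟨s, this⟩
      exact Nat.cast_ne_zero.mpr h.ne'
    unfold uniformA
    simp only [if_pos rfl, ↓reduceIte]
    field_simp
  · intro ρ _ hρ
    unfold uniformA
    rw [if_neg (fun h => hρ h.symm), mul_zero]
  · intro h; exact absurd (Finset.mem_univ _) h
end

section
/- Let P be stochastic on state space S with partition Ω and distributions α_σ supported on σ ∈ Ω. Suppose the pair (Ω, α) is deflatable: for all r, s ∈ S, P(r,s) = α(s)·Σ_{s'∈ω(s)} P(r,s'), where ω(s) is the block containing s and α(s) = α_{ω(s)}(s). Then with Π = APΛ one has ΠA = AP. -/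
open Matrix BigOperators

theorem stmt_16 {n m : ℕ} (ω : Fin n → Fin m)
    (P : Matrix (Fin n) (Fin n) ℝ) (hP : IsStochastic P)
    (α : Fin n → ℝ) (hα0 : ∀ s, 0 ≤ α s)
    (hαsum : ∀ σ : Fin m, ∑ s ∈ Finset.univ.filter (fun s => ω s = σ), α s = 1)
    (hdefl : ∀ r s, P r s =
      α s * ∑ s' ∈ Finset.univ.filter (fun s' => ω s' = ω s), P r s') :
    (weightA ω α * P * indΛ ω) * weightA ω α = weightA ω α * P := by
  ext σ s
  have hL : ((weightA ω α * P * indΛ ω) * weightA ω α) σ s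
      = α s * ∑ s' ∈ Finset.univ.filter (fun s' => ω s' = ω s),
          (weightA ω α * P) σ s' := by
    rw [Matrix.mul_apply]
    rw [Finset.sum_eq_single (ω s)]
    · rw [Matrix.mul_apply, weightA]
      simp only [indΛ]
      simp only [if_true, mul_ite, mul_one, mul_zero]
      rw [mul_comm, Finset.sum_filter]
    · intro b _ hb
      simp [weightA, Ne.symm hb]
    · simp
  rw [hL, Matrix.mul_apply]
  have : ∀ r, P r s = α s * ∑ s' ∈ Finset.univ.filter (fun s' => ω s' = ω s), P r s' :=
    fun r => hdefl r s
  calc α s * ∑ s' ∈ Finset.univ.filter (fun s' => ω s' = ω s), (weightA ω α * P) σ s'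
      = α s * ∑ s' ∈ Finset.univ.filter (fun s' => ω s' = ω s),
          ∑ r, weightA ω α σ r * P r s' := by
        simp only [Matrix.mul_apply]
    _ = ∑ r, weightA ω α σ r *
          (α s * ∑ s' ∈ Finset.univ.filter (fun s' => ω s' = ω s), P r s') := by
        simp only [Finset.mul_sum]
        rw [Finset.sum_comm]
        apply Finset.sum_congr rfl
        intro r _
        apply Finset.sum_congr rfl
        intro x _
        ring
    _ = ∑ r, weightA ω α σ r * P r s := by
        apply Finset.sum_congr rfl
        intro r _
        rw [← hdefl r s]
end

section
/- Let Q be a generator matrix on state space S, Ω a partition of S, A the disaggregation matrix with rows α_σ, Λ the indicator matrix of the partition (AΛ = I), and Θ ∈ ℝ^{m×m} with ΘA = AQ. If the initial distribution p₀ satisfies p₀ᵀΛA = p₀ᵀ (compatibility with the α distributions), then for all t ≥ 0, p₀ᵀe^{Qt}Λ = p₀ᵀΛe^{Θt}; i.e., the aggregated process is a Markov chain with generator Θ (weak lumpability). -/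
open Matrix BigOperators

set_option maxHeartbeats 1000000 in
lemma semiconj_exp {m n : ℕ} (Θ : Matrix (Fin m) (Fin m) ℝ)
    (A : Matrix (Fin m) (Fin n) ℝ) (Q : Matrix (Fin n) (Fin n) ℝ)
    (h : Θ * A = A * Q) :
    NormedSpace.exp Θ * A = A * NormedSpace.exp Q := by
  letI : NormedRing (Matrix (Fin m) (Fin m) ℝ) := Matrix.linftyOpNormedRing
  letI : NormedAlgebra ℝ (Matrix (Fin m) (Fin m) ℝ) := Matrix.linftyOpNormedAlgebra
  letI : NormedRing (Matrix (Fin n) (Fin n) ℝ) := Matrix.linftyOpNormedRing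
  letI : NormedAlgebra ℝ (Matrix (Fin n) (Fin n) ℝ) := Matrix.linftyOpNormedAlgebra
  letI : NormedAddCommGroup (Matrix (Fin m) (Fin n) ℝ) := Matrix.linftyOpNormedAddCommGroup
  letI : NormedSpace ℝ (Matrix (Fin m) (Fin n) ℝ) := Matrix.linftyOpNormedSpace
  have hk : ∀ k : ℕ, Θ ^ k * A = A * Q ^ k := by
    intro k
    induction k with
    | zero => simp
    | succ k ih =>
      rw [pow_succ, pow_succ, Matrix.mul_assoc, h, ← Matrix.mul_assoc, ih, Matrix.mul_assoc]
  let f : Matrix (Fin m) (Fin m) ℝ →ₗ[ℝ] Matrix (Fin m) (Fin n) ℝ :=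
    { toFun := fun X => X * A
      map_add' := fun X Y => Matrix.add_mul X Y A
      map_smul' := fun c X => Matrix.smul_mul c X A }
  let g : Matrix (Fin n) (Fin n) ℝ →ₗ[ℝ] Matrix (Fin m) (Fin n) ℝ :=
    { toFun := fun X => A * X
      map_add' := fun X Y => Matrix.mul_add A X Y
      map_smul' := fun c X => Matrix.mul_smul A c X }
  let F := LinearMap.toContinuousLinearMap f
  let G := LinearMap.toContinuousLinearMap g
  have hF : ∀ X, F X = X * A := fun X => rfl
  have hG : ∀ X, G X = A * X := fun X => rfl
  rw [← hF, ← hG, NormedSpace.exp_eq_tsum (𝕂 := ℝ), NormedSpace.exp_eq_tsum (𝕂 := ℝ),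
    F.map_tsum (NormedSpace.expSeries_summable' Θ),
    G.map_tsum (NormedSpace.expSeries_summable' Q)]
  congr 1
  funext k
  rw [hF, hG, Matrix.smul_mul, Matrix.mul_smul, hk]

theorem stmt_17 {n m : ℕ} (ω : Fin n → Fin m)
    (Q : Matrix (Fin n) (Fin n) ℝ) (hQ : IsGenerator Q)
    (α : Fin n → ℝ) (hα0 : ∀ s, 0 ≤ α s)
    (hαsum : ∀ σ : Fin m, ∑ s ∈ Finset.univ.filter (fun s => ω s = σ), α s = 1)
    (hAL : weightA ω α * indΛ ω = 1)
    (Θ : Matrix (Fin m) (Fin m) ℝ) (hdyn : Θ * weightA ω α = weightA ω α * Q)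
    (p₀ : Fin n → ℝ) (hp₀ : (∀ s, 0 ≤ p₀ s) ∧ ∑ s, p₀ s = 1)
    (hcompat : Matrix.vecMul p₀ (indΛ ω * weightA ω α) = p₀)
    (t : ℝ) (ht : 0 ≤ t) :
    Matrix.vecMul (Matrix.vecMul p₀ (NormedSpace.exp (t • Q))) (indΛ ω) =
      Matrix.vecMul (Matrix.vecMul p₀ (indΛ ω)) (NormedSpace.exp (t • Θ)) := by
  set A := weightA ω α
  set L := indΛ ω
  have hsemi : (t • Θ) * A = A * (t • Q) := by
    rw [Matrix.smul_mul, Matrix.mul_smul, hdyn]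
  have hexp : NormedSpace.exp (t • Θ) * A = A * NormedSpace.exp (t • Q) :=
    semiconj_exp _ _ _ hsemi
  calc Matrix.vecMul (Matrix.vecMul p₀ (NormedSpace.exp (t • Q))) L
      = Matrix.vecMul (Matrix.vecMul (Matrix.vecMul p₀ (L * A)) (NormedSpace.exp (t • Q))) L := by
        rw [hcompat]
    _ = Matrix.vecMul p₀ (L * (NormedSpace.exp (t • Θ) * A) * L) := by
        rw [Matrix.vecMul_vecMul, Matrix.vecMul_vecMul, Matrix.mul_assoc L A _, hexp,
          Matrix.mul_assoc, Matrix.mul_assoc]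
    _ = Matrix.vecMul p₀ (L * NormedSpace.exp (t • Θ)) := by
        rw [Matrix.mul_assoc, Matrix.mul_assoc, hAL, Matrix.mul_one]
    _ = Matrix.vecMul (Matrix.vecMul p₀ L) (NormedSpace.exp (t • Θ)) := by
        rw [Matrix.vecMul_vecMul]
end

section
/- Let Ω be a partition of the state space of a stochastic matrix P that is ε-almost exactly lumpable: for all s, s' in the same block, Σ_{ρ∈Ω} |Σ_{r∈ρ} P(r,s) − Σ_{r∈ρ} P(r,s')| ≤ ε. With uniform α (α(s) = 1/|ω(s)|), disaggregation matrix A, indicator matrix Λ, and Π = APΛ, it holds that ‖ΠA − AP‖_∞ ≤ |Ω| · (max_{ρ∈Ω}|ρ| − 1)/(min_{ρ∈Ω}|ρ|) · ε. -/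
open Matrix BigOperators

/-- auxiliary: column sums of `P` over the block of `σ`. -/
noncomputable def blkG {n m : ℕ} (ω : Fin n → Fin m) (P : Matrix (Fin n) (Fin n) ℝ)
    (σ : Fin m) (s : Fin n) : ℝ :=
  ∑ r ∈ Finset.univ.filter (fun r => ω r = σ), P r s

noncomputable def blkF {n m : ℕ} (ω : Fin n → Fin m) (P : Matrix (Fin n) (Fin n) ℝ)
    (σ ρ : Fin m) : ℝ :=
  ∑ t ∈ Finset.univ.filter (fun t => ω t = ρ), blkG ω P σ t

lemma hAP_aux {n m : ℕ} (ω : Fin n → Fin m) (P : Matrix (Fin n) (Fin n) ℝ)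
    (σ : Fin m) (s : Fin n) :
    (uniformA ω * P) σ s = ((blockCard ω σ : ℝ))⁻¹ * blkG ω P σ s := by
  rw [Matrix.mul_apply, blkG, Finset.mul_sum, Finset.sum_filter]
  apply Finset.sum_congr rfl
  intro r _
  simp only [uniformA, ite_mul, zero_mul]

lemma hAPL_aux {n m : ℕ} (ω : Fin n → Fin m) (P : Matrix (Fin n) (Fin n) ℝ)
    (σ ρ : Fin m) :
    (uniformA ω * P * indΛ ω) σ ρ = ((blockCard ω σ : ℝ))⁻¹ * blkF ω P σ ρ := by
  rw [Matrix.mul_apply, blkF, Finset.mul_sum, Finset.sum_filter]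
  apply Finset.sum_congr rfl
  intro t _
  rw [hAP_aux, indΛ]
  by_cases h : ω t = ρ <;> simp [h]

lemma entry_aux {n m : ℕ} (ω : Fin n → Fin m) (P : Matrix (Fin n) (Fin n) ℝ)
    (σ : Fin m) (s : Fin n) :
    (uniformA ω * P * indΛ ω * uniformA ω - uniformA ω * P) σ s
      = ((blockCard ω σ : ℝ))⁻¹ *
        (blkF ω P σ (ω s) * ((blockCard ω (ω s) : ℝ))⁻¹ - blkG ω P σ s) := by
  rw [Matrix.sub_apply, Matrix.mul_apply, hAP_aux]
  have h1 : ∀ ρ, (uniformA ω * P * indΛ ω) σ ρ * uniformA ω ρ s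
      = if ω s = ρ then ((blockCard ω σ : ℝ))⁻¹ * blkF ω P σ ρ * ((blockCard ω ρ : ℝ))⁻¹
        else 0 := by
    intro ρ
    rw [hAPL_aux, uniformA]
    by_cases h : ω s = ρ <;> simp [h]
  rw [Finset.sum_congr rfl (fun ρ _ => h1 ρ), Finset.sum_ite_eq]
  simp
  ring

theorem stmt_18 {n m : ℕ} (hm : 0 < m) (ω : Fin n → Fin m) (hω : Function.Surjective ω)
    (P : Matrix (Fin n) (Fin n) ℝ) (hP : IsStochastic P)
    (ε : ℝ) (hε : 0 ≤ ε)
    (hlump : ∀ s s', ω s = ω s' →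
      ∑ ρ : Fin m, |(∑ r ∈ Finset.univ.filter (fun r => ω r = ρ), P r s) -
        ∑ r ∈ Finset.univ.filter (fun r => ω r = ρ), P r s'| ≤ ε) :
    ninf (uniformA ω * P * indΛ ω * uniformA ω - uniformA ω * P) ≤
      (m : ℝ) * (((⨆ ρ : Fin m, (blockCard ω ρ : ℝ)) - 1) /
        (⨅ ρ : Fin m, (blockCard ω ρ : ℝ))) * ε := by
  haveI : Nonempty (Fin m) := ⟨⟨0, hm⟩⟩
  have hpos : ∀ ρ : Fin m, (0:ℝ) < (blockCard ω ρ : ℝ) := by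
    intro ρ
    have h1 : 0 < blockCard ω ρ := by
      obtain ⟨s, hs⟩ := hω ρ
      exact Finset.card_pos.mpr ⟨s, by simp [blockCard, hs]⟩
    exact_mod_cast h1
  have hge1 : ∀ ρ : Fin m, (1:ℝ) ≤ (blockCard ω ρ : ℝ) := by
    intro ρ
    have h1 : 0 < blockCard ω ρ := by exact_mod_cast hpos ρ
    exact_mod_cast h1
  set C : Fin m → ℝ := fun ρ => (blockCard ω ρ : ℝ)
  have hbddC : BddAbove (Set.range C) := (Set.finite_range C).bddAbove
  have hbddC' : BddBelow (Set.range C) := (Set.finite_range C).bddBelow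
  have hMx : ∀ ρ, C ρ ≤ ⨆ ρ, C ρ := fun ρ => le_ciSup hbddC ρ
  obtain ⟨ρ₀, hmin⟩ := Finite.exists_min C
  have hMn : (⨅ ρ, C ρ) = C ρ₀ := le_antisymm (ciInf_le hbddC' ρ₀) (le_ciInf hmin)
  have hMnle : ∀ ρ, (⨅ ρ, C ρ) ≤ C ρ := fun ρ => hMn ▸ hmin ρ
  have hMnpos : (0:ℝ) < ⨅ ρ, C ρ := hMn ▸ hpos ρ₀
  have hMx1 : (1:ℝ) ≤ ⨆ ρ, C ρ := le_trans (hge1 ρ₀) (hMx ρ₀)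
  have hMxε : 0 ≤ ((⨆ ρ, C ρ) - 1) * ε := mul_nonneg (by linarith) hε
  -- bound for differences of block column sums within a block
  have hdiff : ∀ (σ : Fin m) (s t : Fin n), ω s = ω t →
      |blkG ω P σ t - blkG ω P σ s| ≤ ε := by
    intro σ s t hst
    calc |blkG ω P σ t - blkG ω P σ s|
        ≤ ∑ ρ : Fin m, |(∑ r ∈ Finset.univ.filter (fun r => ω r = ρ), P r t) -
            ∑ r ∈ Finset.univ.filter (fun r => ω r = ρ), P r s| := by
          exact Finset.single_le_sum (f := fun ρ =>
            |(∑ r ∈ Finset.univ.filter (fun r => ω r = ρ), P r t) -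
             ∑ r ∈ Finset.univ.filter (fun r => ω r = ρ), P r s|)
            (fun ρ _ => abs_nonneg _) (Finset.mem_univ σ)
      _ ≤ ε := hlump t s hst.symm
  apply ciSup_le
  intro σ
  -- row sum rewrite
  have hrow : ∑ s, |(uniformA ω * P * indΛ ω * uniformA ω - uniformA ω * P) σ s|
      = (C σ)⁻¹ * ∑ s, |blkF ω P σ (ω s) * (C (ω s))⁻¹ - blkG ω P σ s| := by
    rw [Finset.mul_sum]
    apply Finset.sum_congr rfl
    intro s _
    rw [entry_aux, abs_mul, abs_of_pos (inv_pos.mpr (hpos σ))]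
  rw [hrow]
  -- fiberwise decomposition
  have hfib : ∑ s, |blkF ω P σ (ω s) * (C (ω s))⁻¹ - blkG ω P σ s|
      = ∑ ρ : Fin m, ∑ s ∈ Finset.univ.filter (fun s => ω s = ρ),
          |blkF ω P σ (ω s) * (C (ω s))⁻¹ - blkG ω P σ s| := by
    exact (Finset.sum_fiberwise Finset.univ ω _).symm
  rw [hfib]
  -- per-block bound
  have hblk : ∀ ρ : Fin m, ∑ s ∈ Finset.univ.filter (fun s => ω s = ρ),
      |blkF ω P σ (ω s) * (C (ω s))⁻¹ - blkG ω P σ s| ≤ ((⨆ ρ, C ρ) - 1) * ε := by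
    intro ρ
    have hterm : ∀ s ∈ Finset.univ.filter (fun s => ω s = ρ),
        |blkF ω P σ (ω s) * (C (ω s))⁻¹ - blkG ω P σ s|
          ≤ (C ρ)⁻¹ * ((C ρ - 1) * ε) := by
      intro s hs
      have hsρ : ω s = ρ := by simpa using hs
      rw [hsρ]
      have key : blkF ω P σ ρ * (C ρ)⁻¹ - blkG ω P σ s
          = (C ρ)⁻¹ * ∑ t ∈ Finset.univ.filter (fun t => ω t = ρ),
              (blkG ω P σ t - blkG ω P σ s) := by
        rw [Finset.sum_sub_distrib, Finset.sum_const]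
        have hc : ((Finset.univ.filter (fun t => ω t = ρ)).card : ℝ) = C ρ := by
          simp [C, blockCard]
        rw [nsmul_eq_mul, hc, blkF, mul_sub, mul_comm]
        congr 1
        exact (inv_mul_cancel_left₀ (ne_of_gt (hpos ρ)) _).symm
      rw [key, abs_mul, abs_of_pos (inv_pos.mpr (hpos ρ))]
      apply mul_le_mul_of_nonneg_left _ (le_of_lt (inv_pos.mpr (hpos ρ)))
      calc |∑ t ∈ Finset.univ.filter (fun t => ω t = ρ), (blkG ω P σ t - blkG ω P σ s)|
          ≤ ∑ t ∈ Finset.univ.filter (fun t => ω t = ρ), |blkG ω P σ t - blkG ω P σ s| :=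
            Finset.abs_sum_le_sum_abs _ _
        _ = ∑ t ∈ (Finset.univ.filter (fun t => ω t = ρ)).erase s,
              |blkG ω P σ t - blkG ω P σ s| := by
            rw [← Finset.add_sum_erase _ _ (show s ∈ _ by simpa using hsρ)]
            simp
        _ ≤ ∑ t ∈ (Finset.univ.filter (fun t => ω t = ρ)).erase s, ε := by
            apply Finset.sum_le_sum
            intro t ht
            have : ω t = ρ := by
              have := Finset.mem_of_mem_erase ht
              simpa using this
            exact hdiff σ s t (hsρ.trans this.symm)
        _ = ((Finset.univ.filter (fun t => ω t = ρ)).erase s).card * ε := by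
            rw [Finset.sum_const, nsmul_eq_mul]
        _ ≤ (C ρ - 1) * ε := by
            apply mul_le_mul_of_nonneg_right _ hε
            rw [Finset.card_erase_of_mem (show s ∈ _ by simpa using hsρ)]
            have hc1 : 1 ≤ (Finset.univ.filter (fun t => ω t = ρ)).card := by
              have := hpos ρ
              simp only [C, blockCard] at this ⊢
              exact_mod_cast this
            have : (((Finset.univ.filter (fun t => ω t = ρ)).card - 1 : ℕ) : ℝ)
                = C ρ - 1 := by
              rw [Nat.cast_sub hc1]
              simp [C, blockCard]
            rw [this]
    calc ∑ s ∈ Finset.univ.filter (fun s => ω s = ρ),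
          |blkF ω P σ (ω s) * (C (ω s))⁻¹ - blkG ω P σ s|
        ≤ ∑ s ∈ Finset.univ.filter (fun s => ω s = ρ), (C ρ)⁻¹ * ((C ρ - 1) * ε) :=
          Finset.sum_le_sum hterm
      _ = (Finset.univ.filter (fun s => ω s = ρ)).card * ((C ρ)⁻¹ * ((C ρ - 1) * ε)) := by
          rw [Finset.sum_const, nsmul_eq_mul]
      _ = (C ρ - 1) * ε := by
          have hc : ((Finset.univ.filter (fun s => ω s = ρ)).card : ℝ) = C ρ := by
            simp [C, blockCard]
          rw [hc]
          exact mul_inv_cancel_left₀ (ne_of_gt (hpos ρ)) _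
      _ ≤ ((⨆ ρ, C ρ) - 1) * ε := by
          apply mul_le_mul_of_nonneg_right _ hε
          linarith [hMx ρ]
  calc (C σ)⁻¹ * ∑ ρ : Fin m, ∑ s ∈ Finset.univ.filter (fun s => ω s = ρ),
        |blkF ω P σ (ω s) * (C (ω s))⁻¹ - blkG ω P σ s|
      ≤ (C σ)⁻¹ * ∑ ρ : Fin m, ((⨆ ρ, C ρ) - 1) * ε := by
        apply mul_le_mul_of_nonneg_left _ (le_of_lt (inv_pos.mpr (hpos σ)))
        exact Finset.sum_le_sum (fun ρ _ => hblk ρ)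
    _ = (C σ)⁻¹ * ((m : ℝ) * (((⨆ ρ, C ρ) - 1) * ε)) := by
        rw [Finset.sum_const, Finset.card_univ, Fintype.card_fin, nsmul_eq_mul]
    _ ≤ (⨅ ρ, C ρ)⁻¹ * ((m : ℝ) * (((⨆ ρ, C ρ) - 1) * ε)) := by
        apply mul_le_mul_of_nonneg_right _
          (mul_nonneg (Nat.cast_nonneg m) hMxε)
        exact inv_anti₀ hMnpos (hMnle σ)
    _ = (m : ℝ) * (((⨆ ρ, C ρ) - 1) / (⨅ ρ, C ρ)) * ε := by
        field_simp
end
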